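/- If Δ_i(v,g) = 0 for all networks g with i ∈ N(g), then removing player i from the probability distribution does not change expected wealth: 𝔼(v, ρ^{-i}) = 𝔼(v,ρ). Similarly, if Δ_{ij}(v,g) = 0 for all g with ij ∉ g, then 𝔼(v, ρ^{-ij}) = 𝔼(v,ρ). -/

import Mathlib

open scoped Classical BigOperators

noncomputable section

/-- A link is an unordered pair of two distinct players. -/
abbrev Link (N : Type) [DecidableEq N] := {e : Sym2 N // ¬ e.IsDiag}

/-- A network is a set of links. -/
abbrev Network (N : Type) [Fintype N] [DecidableEq N] := Finset (Link N)

variable {N : Type} [Fintype N] [DecidableEq N]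

/-- The link between two distinct players. -/
def mkLink (i j : N) (h : i ≠ j) : Link N :=
  ⟨s(i, j), by simp only [Sym2.mk_isDiag_iff]; exact h⟩

/-- ρ is a network formation probability distribution. -/
def IsDist (ρ : Network N → ℝ) : Prop :=
  (∀ g, 0 ≤ ρ g) ∧ ∑ g : Network N, ρ g = 1

/-- Restriction of a network formation probability distribution to a network `g`. -/
def restrictDist (ρ : Network N → ℝ) (g : Network N) : Network N → ℝ :=
  fun h => if h ⊆ g then ∑ h' ∈ gᶜ.powerset, ρ (h ∪ h') else 0

/-- The links of player `i` in network `g`. -/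
def playerLinks (i : N) (g : Network N) : Network N :=
  g.filter (fun e => i ∈ (e : Sym2 N))

/-- ρ^{-ij} : removal of the link `e` from the distribution ρ. -/
def linkRemove (ρ : Network N → ℝ) (e : Link N) : Network N → ℝ :=
  restrictDist ρ {e}ᶜ

/-- ρ^{-i} : removal of the player `i` from the distribution ρ. -/
def playerRemove (ρ : Network N → ℝ) (i : N) : Network N → ℝ :=
  restrictDist ρ (playerLinks i Finset.univ)ᶜ

/-- The extent g(ρ) of ρ : the union of all networks with positive probability. -/
def extent (ρ : Network N → ℝ) : Network N :=
  Finset.univ.filter (fun e => ∃ g : Network N, 0 < ρ g ∧ e ∈ g)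

/-- The set N(g) of non-isolated players of a network. -/
def players (g : Network N) : Finset N :=
  Finset.univ.filter (fun i => ∃ e ∈ g, i ∈ (e : Sym2 N))

/-- The simple graph associated with a network. -/
def toGraph (g : Network N) : SimpleGraph N where
  Adj i j := ∃ e ∈ g, (e : Sym2 N) = s(i, j)
  symm := by
    constructor
    rintro i j ⟨e, he, h2⟩
    exact ⟨e, he, by rw [h2, Sym2.eq_swap]⟩
  loopless := by
    constructor
    rintro i ⟨e, he, h2⟩
    exact e.2 (by rw [h2]; exact Sym2.mk_isDiag_iff.mpr rfl)

/-- Two links lie in the same component of `g`. -/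
def sameComp (g : Network N) (e e' : Link N) : Prop :=
  ∃ i ∈ (e : Sym2 N), ∃ j ∈ (e' : Sym2 N), (toGraph g).Reachable i j

/-- The component of `g` containing the link `e`. -/
def linkComponent (g : Network N) (e : Link N) : Network N :=
  g.filter (fun e' => sameComp g e e')

/-- The set C(g) of components of the network `g`. -/
def components (g : Network N) : Finset (Network N) :=
  g.image (linkComponent g)

/-- A network game `v` is component additive. -/
def CompAdditive (v : Network N → ℝ) : Prop :=
  ∀ g : Network N, v g = ∑ h ∈ components g, v h

/-- Expected wealth 𝔼(v,ρ) of a variable network game. -/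
def expWealth (v ρ : Network N → ℝ) : ℝ :=
  ∑ g : Network N, ρ g * v g

/-- The Shapley value of a cooperative game. -/
def shapley (ω : Finset N → ℝ) (i : N) : ℝ :=
  ∑ S ∈ (Finset.univ.erase i).powerset,
    ((S.card.factorial * (Fintype.card N - S.card - 1).factorial : ℝ) /
      (Fintype.card N).factorial) * (ω (insert i S) - ω S)

/-- The restriction g|S of a network to the coalition S. -/
def netRestrict (g : Network N) (S : Finset N) : Network N :=
  g.filter (fun e => ∀ j ∈ (e : Sym2 N), j ∈ S)

/-- The Myerson Value of a network game. -/
def myerson (v : Network N → ℝ) (g : Network N) (i : N) : ℝ :=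
  shapley (fun S => v (netRestrict g S)) i

/-- The Expected Myerson Value of a variable network game. -/
def expectedMyerson (v ρ : Network N → ℝ) (i : N) : ℝ :=
  ∑ g : Network N, ρ g * myerson v g i

/-- The cooperative game ω_{(v,ρ)} associated with a variable network game. -/
def coopGame (v ρ : Network N → ℝ) (S : Finset N) : ℝ :=
  ∑ g : Network N, ρ g * v (netRestrict g S)

lemma union_inter_eq {g : Network N} {p : Network N × Network N}
    (h1 : p.1 ⊆ g) (h2 : p.2 ⊆ gᶜ) : (p.1 ∪ p.2) ∩ g = p.1 := by
  ext x
  simp only [Finset.mem_inter, Finset.mem_union]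
  constructor
  · rintro ⟨hx | hx, hx2⟩
    · exact hx
    · exact absurd hx2 (by simpa using h2 hx)
  · intro hx; exact ⟨Or.inl hx, h1 hx⟩

lemma expWealth_restrict (v ρ : Network N → ℝ) (g : Network N) :
    expWealth v (restrictDist ρ g) = ∑ k : Network N, ρ k * v (k ∩ g) := by
  unfold expWealth restrictDist
  simp only [ite_mul, zero_mul]
  rw [← Finset.sum_filter]
  rw [show (Finset.univ.filter (· ⊆ g)) = g.powerset from by
      ext h; simp [Finset.mem_powerset]]
  simp only [Finset.sum_mul]
  rw [← Finset.sum_product']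
  refine Finset.sum_nbij' (fun p => p.1 ∪ p.2) (fun k => (k ∩ g, k \ g)) ?_ ?_ ?_ ?_ ?_
  · intro p _; exact Finset.mem_univ _
  · intro k _
    simp only [Finset.mem_product, Finset.mem_powerset]
    refine ⟨Finset.inter_subset_right, ?_⟩
    intro x hx; simp only [Finset.mem_sdiff] at hx; simp [hx.2]
  · intro p hp
    simp only [Finset.mem_product, Finset.mem_powerset] at hp
    have e1 : (p.1 ∪ p.2) ∩ g = p.1 := union_inter_eq hp.1 hp.2
    have e2 : (p.1 ∪ p.2) \ g = p.2 := by
      ext x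
      simp only [Finset.mem_sdiff, Finset.mem_union]
      constructor
      · rintro ⟨hx | hx, hx2⟩
        · exact absurd (hp.1 hx) hx2
        · exact hx
      · intro hx; exact ⟨Or.inr hx, by simpa using hp.2 hx⟩
    exact Prod.ext e1 e2
  · intro k _
    ext x; simp only [Finset.mem_union, Finset.mem_inter, Finset.mem_sdiff]; tauto
  · intro p hp
    simp only [Finset.mem_product, Finset.mem_powerset] at hp
    rw [union_inter_eq hp.1 hp.2]

/-- null players and superfluous links do not affect expected wealth. -/
theorem expWealth_null (v ρ : Network N → ℝ) (hv : v ∅ = 0) (hρ : IsDist ρ)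
    (i : N) (e : Link N) :
    ((∀ g : Network N, i ∈ players g → v g - v (g \ playerLinks i Finset.univ) = 0) →
      expWealth v (playerRemove ρ i) = expWealth v ρ) ∧
    ((∀ g : Network N, e ∉ g → v (insert e g) - v g = 0) →
      expWealth v (linkRemove ρ e) = expWealth v ρ) := by
  have hc : ∀ (s t : Network N), s ∩ tᶜ = s \ t := fun s t => by
    ext x; simp [Finset.mem_sdiff]
  constructor
  · intro h
    rw [playerRemove, expWealth_restrict]
    unfold expWealth
    refine Finset.sum_congr rfl fun k _ => ?_
    congr 1
    rw [hc]
    by_cases hik : i ∈ players k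
    · have hki : k \ playerLinks i Finset.univ = k \ playerLinks i k := by
        ext x
        simp only [Finset.mem_sdiff, playerLinks, Finset.mem_filter, Finset.mem_univ,
          true_and]
        tauto
      have := h k hik
      rw [hki, ← hki]
      linarith
    · have : k \ playerLinks i Finset.univ = k := by
        ext x
        simp only [Finset.mem_sdiff, playerLinks, Finset.mem_filter, Finset.mem_univ,
          true_and, and_iff_left_iff_imp]
        intro hx hix
        exfalso
        apply hik
        simp only [players, Finset.mem_filter, Finset.mem_univ, true_and]
        exact ⟨x, hx, hix⟩
      rw [this]
  · intro h
    rw [linkRemove, expWealth_restrict]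
    unfold expWealth
    refine Finset.sum_congr rfl fun k _ => ?_
    congr 1
    rw [hc]
    by_cases hek : e ∈ k
    · have h2 := h (k \ {e}) (by simp)
      have : insert e (k \ {e}) = k := by
        ext x
        simp only [Finset.mem_insert, Finset.mem_sdiff, Finset.mem_singleton]
        constructor
        · rintro (rfl | ⟨hx, _⟩) <;> [exact hek; exact hx]
        · intro hx
          by_cases hxe : x = e
          · exact Or.inl hxe
          · exact Or.inr ⟨hx, hxe⟩
      rw [this] at h2
      linarith
    · rw [Finset.sdiff_singleton_eq_erase, Finset.erase_eq_of_notMem hek]
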